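/- Let p be an odd prime and for 1 ≤ i, j ≤ p-1 let t_{i,j} be the number of pairs (x,y) in F_p^× × F_p^× with x + y = 1 and x^{-1} + i y^{-1} = j. Then t_{i,j} = 1 + (f_j(i)/p) where f_j(x) = x^2 - 2(j+1)x + (j-1)^2 and (·/p) is the Legendre symbol. -/

import Mathlib

open Finset

theorem tij_count (p : ℕ) [Fact p.Prime] (hodd : Odd p) (i j : ℕ)
    (hi : 1 ≤ i ∧ i ≤ p - 1) (hj : 1 ≤ j ∧ j ≤ p - 1) :
    ((Finset.univ.filter (fun q : (ZMod p)ˣ × (ZMod p)ˣ =>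
        (q.1 : ZMod p) + (q.2 : ZMod p) = 1 ∧
        ((q.1⁻¹ : (ZMod p)ˣ) : ZMod p) + (i : ZMod p) * ((q.2⁻¹ : (ZMod p)ˣ) : ZMod p)
          = (j : ZMod p))).card : ℤ) =
      1 + legendreSym p ((i : ℤ) ^ 2 - 2 * ((j : ℤ) + 1) * i + ((j : ℤ) - 1) ^ 2) := by
  have hp : p.Prime := Fact.out
  have hp2 : p ≠ 2 := by
    rintro rfl
    exact (Nat.not_odd_iff_even.mpr (by norm_num)) hodd
  have hchar : ringChar (ZMod p) ≠ 2 := by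
    rw [ZMod.ringChar_zmod_n]; exact_mod_cast hp2
  have h2 : (2 : ZMod p) ≠ 0 := Ring.two_ne_zero hchar
  set a : ZMod p := (i : ZMod p) with ha_def
  set b : ZMod p := (j : ZMod p) with hb_def
  have hplt : p - 1 < p := Nat.sub_lt hp.pos one_pos
  have ha : a ≠ 0 := by
    rw [ha_def, Ne, ZMod.natCast_eq_zero_iff]
    intro h
    have := Nat.eq_zero_of_dvd_of_lt h (lt_of_le_of_lt hi.2 hplt)
    omega
  have hb : b ≠ 0 := by
    rw [hb_def, Ne, ZMod.natCast_eq_zero_iff]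
    intro h
    have := Nat.eq_zero_of_dvd_of_lt h (lt_of_le_of_lt hj.2 hplt)
    omega
  set c : ZMod p := a - 1 - b with hc_def
  set D : ZMod p := a ^ 2 - 2 * (b + 1) * a + (b - 1) ^ 2 with hD_def
  have hDc : c ^ 2 - 4 * b = D := by rw [hc_def, hD_def]; ring
  -- Step A: pairs ↔ roots of quadratic
  have stepA : (Finset.univ.filter (fun q : (ZMod p)ˣ × (ZMod p)ˣ =>
        (q.1 : ZMod p) + (q.2 : ZMod p) = 1 ∧
        ((q.1⁻¹ : (ZMod p)ˣ) : ZMod p) + a * ((q.2⁻¹ : (ZMod p)ˣ) : ZMod p)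
          = b)).card
      = (Finset.univ.filter (fun x : ZMod p => b * x ^ 2 + c * x + 1 = 0)).card := by
    apply Finset.card_bij (fun q _ => (q.1 : ZMod p))
    · rintro ⟨u, v⟩ hq
      simp only [Finset.mem_filter, Finset.mem_univ, true_and] at hq ⊢
      obtain ⟨h1, h2⟩ := hq
      rw [Units.val_inv_eq_inv_val, Units.val_inv_eq_inv_val] at h2
      have hu : (u : ZMod p) ≠ 0 := u.ne_zero
      have hv : (v : ZMod p) ≠ 0 := v.ne_zero
      field_simp at h2
      rw [hc_def]
      linear_combination h2 + (b * (u : ZMod p) - 1) * h1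
    · rintro ⟨u, v⟩ hq ⟨u', v'⟩ hq' h
      simp only [Finset.mem_filter, Finset.mem_univ, true_and] at hq hq'
      have hu : u = u' := Units.ext h
      have hv : (v : ZMod p) = (v' : ZMod p) := by
        subst hu; linear_combination hq.1 - hq'.1
      exact Prod.ext hu (Units.ext hv)
    · intro x hx
      simp only [Finset.mem_filter, Finset.mem_univ, true_and] at hx
      have hx0 : x ≠ 0 := by
        rintro rfl; simp at hx
      have hx1 : 1 - x ≠ 0 := by
        intro h
        have hx1' : x = 1 := by linear_combination -h
        rw [hx1', hc_def] at hx
        apply ha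
        linear_combination hx
      refine ⟨(Units.mk0 x hx0, Units.mk0 (1 - x) hx1), ?_, rfl⟩
      simp only [Finset.mem_filter, Finset.mem_univ, true_and]
      constructor
      · simp
      · rw [Units.val_inv_eq_inv_val, Units.val_inv_eq_inv_val]
        simp only [Units.val_mk0]
        field_simp
        rw [hc_def] at hx
        linear_combination hx
  -- Step B: roots of quadratic ↔ square roots of D
  have stepB : (Finset.univ.filter (fun x : ZMod p => b * x ^ 2 + c * x + 1 = 0)).card
      = (Finset.univ.filter (fun y : ZMod p => y ^ 2 = D)).card := by
    apply Finset.card_bij (fun x _ => 2 * b * x + c)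
    · intro x hx
      simp only [Finset.mem_filter, Finset.mem_univ, true_and] at hx ⊢
      linear_combination 4 * b * hx + hDc
    · intro x hx x' hx' h
      have h2b : 2 * b ≠ 0 := mul_ne_zero h2 hb
      have : 2 * b * x = 2 * b * x' := by linear_combination h
      exact mul_left_cancel₀ h2b this
    · intro y hy
      simp only [Finset.mem_filter, Finset.mem_univ, true_and] at hy
      have h2b : 2 * b ≠ 0 := mul_ne_zero h2 hb
      refine ⟨(y - c) / (2 * b), ⟨Finset.mem_filter.mpr ⟨Finset.mem_univ _, ?_⟩, ?_⟩⟩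
      · field_simp
        linear_combination hy.trans hD_def
      · field_simp
        ring
  -- Step C: count square roots via quadraticChar
  have stepC : ((Finset.univ.filter (fun y : ZMod p => y ^ 2 = D)).card : ℤ)
      = quadraticChar (ZMod p) D + 1 := by
    have := quadraticChar_card_sqrts hchar D
    rw [← this]
    congr 1
    rw [Set.toFinset_setOf]
  have hcastD : ((( (i : ℤ) ^ 2 - 2 * ((j : ℤ) + 1) * i + ((j : ℤ) - 1) ^ 2) : ℤ) : ZMod p) = D := by
    rw [hD_def, ha_def, hb_def]; push_cast; ring
  have hleg : legendreSym p ((i : ℤ) ^ 2 - 2 * ((j : ℤ) + 1) * i + ((j : ℤ) - 1) ^ 2)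
      = quadraticChar (ZMod p) D := by
    rw [legendreSym, hcastD]
  rw [stepA, stepB, stepC, hleg]
  ring
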